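/- Any two occurrence partitions of the same nonempty pattern P with respect to a text T, both satisfying the maximality property, have sizes that differ by a bounded argument: in particular, the greedy partition obtained by repeatedly taking the longest prefix of the remaining pattern that occurs in T (or a single character if none occurs) is an occurrence partition of minimum size. -/

import Mathlib

private lemma aux_flatten_drop {α : Type*} (L : List (List α)) (j : ℕ) :
    (L.drop j).flatten = L.flatten.drop ((L.take j).flatten).length := by
  have h : L.flatten = (L.take j).flatten ++ (L.drop j).flatten := by
    rw [← List.flatten_append, List.take_append_drop]
  rw [h, List.drop_left]

private lemma aux_f_succ {α : Type*} (L : List (List α)) (j : ℕ) (h : j < L.length) :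
    ((L.take (j+1)).flatten).length = ((L.take j).flatten).length + L[j].length := by
  rw [List.take_succ, List.getElem?_eq_getElem h, Option.toList_some,
    List.flatten_append, List.length_append, List.flatten_cons, List.flatten_nil,
    List.append_nil]

private lemma aux_f_le {α : Type*} (L : List (List α)) (j : ℕ) :
    ((L.take j).flatten).length ≤ L.flatten.length := by
  have h : L.flatten = (L.take j).flatten ++ (L.drop j).flatten := by
    rw [← List.flatten_append, List.take_append_drop]
  rw [h, List.length_append]; omega

private lemma aux_f_mono {α : Type*} (L : List (List α)) (j : ℕ) :
    ((L.take j).flatten).length ≤ ((L.take (j+1)).flatten).length := by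
  by_cases h : j < L.length
  · rw [aux_f_succ L j h]; omega
  · rw [List.take_of_length_le (by omega), List.take_of_length_le (by omega)]

private lemma aux_f_full {α : Type*} (L : List (List α)) (j : ℕ) (h : L.length ≤ j) :
    ((L.take j).flatten).length = L.flatten.length := by
  rw [List.take_of_length_le h]

private lemma aux_f_lt {α : Type*} (L : List (List α)) (hne : ∀ Q ∈ L, Q ≠ [])
    (j : ℕ) (h : j < L.length) :
    ((L.take j).flatten).length < L.flatten.length := by
  have hsucc := aux_f_succ L j h
  have h1 := aux_f_le L (j + 1)
  have h2 : L[j].length ≠ 0 := by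
    simp only [ne_eq, List.length_eq_zero_iff]
    exact hne _ (List.getElem_mem h)
  omega

theorem stmt11 {α : Type*} (T P : List α) (hP : P ≠ []) (L : List (List α))
    (hjoin : L.flatten = P) (hne : ∀ Q ∈ L, Q ≠ [])
    (hocc : ∀ Q ∈ L, Q <:+: T ∨ Q.length = 1)
    (hgreedy : ∀ i : ℕ, (h : i + 1 < L.length) →
      ¬ ((L.get ⟨i, Nat.lt_of_succ_lt h⟩ ++ (L.get ⟨i + 1, h⟩).take 1) <:+: T))
    (M : List (List α)) (hMjoin : M.flatten = P) (hMne : ∀ Q ∈ M, Q ≠ [])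
    (hMocc : ∀ Q ∈ M, Q <:+: T ∨ Q.length = 1) :
    L.length ≤ M.length := by
  have key : ∀ j, ((M.take j).flatten).length ≤ ((L.take j).flatten).length := by
    intro j
    induction j with
    | zero => simp
    | succ j ih =>
      by_cases hMj : j < M.length
      · by_cases hLj : j < L.length
        · -- main case
          rw [aux_f_succ M j hMj]
          set a := ((M.take j).flatten).length with ha
          set b := ((L.take j).flatten).length with hb
          set m := M[j].length with hm
          set l := L[j].length with hl
          by_contra hcon
          push_neg at hcon
          have hfLj1 : ((L.take (j+1)).flatten).length = b + l := aux_f_succ L j hLj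
          have hamle : a + m ≤ P.length := by
            have := aux_f_le M (j+1)
            rw [aux_f_succ M j hMj, hMjoin] at this
            omega
          have hblt : b + l < P.length := by omega
          have h1 : j + 1 < L.length := by
            by_contra h
            have := aux_f_full L (j+1) (by omega)
            rw [hjoin] at this; omega
          -- drop facts
          have hLdrop : (L.drop j).flatten = P.drop b := by
            rw [aux_flatten_drop, hjoin]
          have hMdrop : (M.drop j).flatten = P.drop a := by
            rw [aux_flatten_drop, hMjoin]
          have hLd : L.drop j = L[j] :: (L[j+1] :: L.drop (j+2)) := by
            rw [List.drop_eq_getElem_cons hLj, List.drop_eq_getElem_cons h1]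
          have hMd : M.drop j = M[j] :: M.drop (j+1) := List.drop_eq_getElem_cons hMj
          -- M[j] as a slice of P
          have hMP : M[j] = (P.drop a).take m := by
            rw [← hMdrop, hMd]
            simp only [List.flatten_cons, hm]
            rw [List.take_left]
          -- S as a slice of P
          have hS : L[j] ++ (L[j+1]).take 1 = (P.drop b).take (l + 1) := by
            rw [← hLdrop, hLd]
            simp only [List.flatten_cons, List.append_assoc]
            rw [show l + 1 = L[j].length + 1 from rfl, List.take_length_add_append,
              List.append_cancel_left_eq]
            rw [List.take_append_of_le_length]
            have : L[j+1] ≠ [] := hne _ (List.getElem_mem h1)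
            have : L[j+1].length ≠ 0 := by simpa [List.length_eq_zero_iff]
            omega
          -- S is an infix of M[j]
          have hinfix : (L[j] ++ (L[j+1]).take 1) <:+: M[j] := by
            have heq : (M[j].drop (b - a)).take (l + 1) = (P.drop b).take (l + 1) := by
              rw [hMP, List.drop_take, List.drop_drop]
              rw [show a + (b - a) = b by omega]
              rw [List.take_take, show min (l+1) (m - (b-a)) = l + 1 by omega]
            rw [hS, ← heq]
            exact ((List.take_prefix _ _).isInfix).trans ((List.drop_suffix _ _).isInfix)
          have hSlen : (L[j] ++ (L[j+1]).take 1).length = l + 1 := by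
            rw [hS, List.length_take]
            have := aux_f_lt L hne (j+1) h1
            rw [hjoin, hfLj1] at this
            simp [List.length_drop]; omega
          rcases hMocc M[j] (List.getElem_mem hMj) with hT | hone
          · exact hgreedy j h1 (by simpa using hinfix.trans hT)
          · have := hinfix.length_le
            have hl1 : l ≠ 0 := by
              have : L[j] ≠ [] := hne _ (List.getElem_mem hLj)
              simpa [hl, List.length_eq_zero_iff]
            omega
        · -- L exhausted: fL j = |P|
          have hfull := aux_f_full L j (by omega)
          rw [hjoin] at hfull
          have := aux_f_le M (j+1)
          rw [hMjoin] at this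
          calc ((M.take (j+1)).flatten).length ≤ P.length := this
            _ = ((L.take j).flatten).length := hfull.symm
            _ ≤ _ := aux_f_mono L j
      · have e : ((M.take (j+1)).flatten).length = ((M.take j).flatten).length := by
          rw [List.take_of_length_le (by omega), List.take_of_length_le (by omega)]
        rw [e]
        exact le_trans ih (aux_f_mono L j)
  by_contra hcon
  push_neg at hcon
  have h1 := key M.length
  rw [List.take_length, hMjoin] at h1
  have h2 := aux_f_lt L hne M.length hcon
  rw [hjoin] at h2
  omega
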